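/- Define the sequence A₀ = 0, A₁ = 1, A_{n+2} = m·A_{n+1} − A_n + 1 for n ≥ 0, where m ≥ 3 is an integer and γ = (m+√(m²−4))/2. Then for all n ≥ 0, A_n = (γ^{2n+1} − γⁿ(1+γ) + 1) / (γ^{n−1}(γ+1)(γ−1)²). -/

import Mathlib

theorem stmt_1 (m : ℕ) (hm : 3 ≤ m) (γ : ℝ)
    (hγ : γ = ((m : ℝ) + Real.sqrt ((m : ℝ)^2 - 4)) / 2)
    (A : ℕ → ℝ) (hA0 : A 0 = 0) (hA1 : A 1 = 1)
    (hArec : ∀ n : ℕ, A (n + 2) = (m : ℝ) * A (n + 1) - A n + 1) :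
    ∀ n : ℕ, A n =
      (γ ^ (2 * n + 1) - γ ^ n * (1 + γ) + 1) /
        (γ ^ ((n : ℝ) - 1) * (γ + 1) * (γ - 1)^2) := by
  have hm' : (3:ℝ) ≤ (m:ℝ) := by exact_mod_cast hm
  have hsnn := Real.sqrt_nonneg ((m:ℝ)^2 - 4)
  have hs : Real.sqrt ((m:ℝ)^2 - 4) ^ 2 = (m:ℝ)^2 - 4 := by
    rw [Real.sq_sqrt]; nlinarith
  have hγ1 : 1 < γ := by rw [hγ]; nlinarith
  have hγ0 : 0 < γ := by linarith
  have hγne : γ ≠ 0 := ne_of_gt hγ0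
  have hsq : γ ^ 2 = (m:ℝ) * γ - 1 := by
    rw [hγ]; linear_combination (1/4 : ℝ) * hs
  have hD : (γ + 1) * (γ - 1) ^ 2 ≠ 0 := by
    have : 0 < (γ + 1) * (γ - 1) ^ 2 := by nlinarith
    exact ne_of_gt this
  have hr : ∀ n : ℕ, γ ^ ((n : ℝ) - 1) = γ ^ n / γ := by
    intro n
    rw [Real.rpow_sub hγ0, Real.rpow_natCast, Real.rpow_one]
  suffices h : ∀ n : ℕ, A n =
      (γ ^ (2 * n + 1) - γ ^ n * (1 + γ) + 1) /
        (γ ^ ((n : ℝ) - 1) * (γ + 1) * (γ - 1)^2) ∧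
      A (n+1) =
      (γ ^ (2 * (n+1) + 1) - γ ^ (n+1) * (1 + γ) + 1) /
        (γ ^ (((n+1 : ℕ) : ℝ) - 1) * (γ + 1) * (γ - 1)^2) by
    intro n; exact (h n).1
  intro n
  induction n with
  | zero =>
    constructor
    · rw [hA0, hr]; norm_num
    · rw [hA1, hr]; norm_num
      have hm1 : γ - 1 ≠ 0 := by intro h; nlinarith
      field_simp [hm1]
      ring
  | succ k ih =>
    obtain ⟨h1, h2⟩ := ih
    refine ⟨h2, ?_⟩
    rw [hArec k, h1, h2]
    rw [hr, hr, hr]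
    have e1 : γ ^ (2 * (k+1) + 1) = γ^k * γ^k * γ^3 := by ring
    have e2 : γ ^ (2 * (k+1+1) + 1) = γ^k * γ^k * γ^5 := by ring
    have e3 : γ ^ (2 * k + 1) = γ^k * γ^k * γ := by ring
    have e4 : γ ^ (k+1) = γ^k * γ := by ring
    have e5 : γ ^ (k+1+1) = γ^k * γ^2 := by ring
    rw [e1, e2, e3, e4, e5]
    have hxne : (γ:ℝ) ^ k ≠ 0 := pow_ne_zero k hγne
    have hp1 : γ + 1 ≠ 0 := by positivity
    have hm1 : γ - 1 ≠ 0 := by intro h; nlinarith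
    field_simp [hxne, hγne, hp1, hm1]
    linear_combination (-1 + γ*γ^k + γ^2*γ^k - γ^3*(γ^k)^2) * hsq
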